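/- arXiv:2512.02347 — 9 statements merged into one kernel-verified Lean document; each statement's English description precedes it below -/
import Mathlib

section
/- Let N be a finite nonempty set of players with value function v(S) = Σ_{i∈S} U_i − α|S|/R₀ − (β+γ)/R₀ for nonempty S ⊆ N (and v(∅)=0), where R₀ > 0, α > 0, β, γ ≥ 0. Then the game is convex: for all S₁, S₂ ⊆ N, v(S₁) + v(S₂) ≤ v(S₁ ∪ S₂) + v(S₁ ∩ S₂). -/
/-- The symmetric multicast game is convex. -/
theorem stmt1 {ι : Type*} [DecidableEq ι] (N : Finset ι) (hN : N.Nonempty)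
    (U : ι → ℝ) (R₀ α β γ : ℝ) (hR₀ : 0 < R₀) (hα : 0 < α) (hβ : 0 ≤ β) (hγ : 0 ≤ γ)
    (v : Finset ι → ℝ) (hv0 : v ∅ = 0)
    (hv : ∀ S : Finset ι, S.Nonempty →
      v S = ∑ i ∈ S, U i - α * S.card / R₀ - (β + γ) / R₀) :
    ∀ S₁ S₂ : Finset ι, S₁ ⊆ N → S₂ ⊆ N →
      v S₁ + v S₂ ≤ v (S₁ ∪ S₂) + v (S₁ ∩ S₂) := by
  intro S₁ S₂ _ _
  rcases S₁.eq_empty_or_nonempty with h1 | h1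
  · simp [h1, hv0]
  rcases S₂.eq_empty_or_nonempty with h2 | h2
  · simp [h2, hv0]
  have hU : (S₁ ∪ S₂).Nonempty := h1.mono Finset.subset_union_left
  have hsum : ∑ i ∈ S₁ ∪ S₂, U i + ∑ i ∈ S₁ ∩ S₂, U i
      = ∑ i ∈ S₁, U i + ∑ i ∈ S₂, U i := Finset.sum_union_inter
  have hcard : ((S₁ ∪ S₂).card : ℝ) + ((S₁ ∩ S₂).card : ℝ)
      = (S₁.card : ℝ) + (S₂.card : ℝ) := by
    have := Finset.card_union_add_card_inter S₁ S₂
    exact_mod_cast this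
  have hc : 0 ≤ (β + γ) / R₀ := by positivity
  rcases (S₁ ∩ S₂).eq_empty_or_nonempty with hi | hi
  · have hd : S₁ ∩ S₂ = ∅ := hi
    rw [hv _ h1, hv _ h2, hv _ hU, hd, hv0]
    rw [hd] at hsum hcard
    simp at hsum hcard
    have hcard' : α * ((S₁ ∪ S₂).card : ℝ) / R₀ = α * S₁.card / R₀ + α * S₂.card / R₀ := by
      rw [← add_div, ← mul_add, hcard]
    linarith [hsum, hcard', hc]
  · rw [hv _ h1, hv _ h2, hv _ hU, hv _ hi]
    have hcard' : α * ((S₁ ∪ S₂).card : ℝ) / R₀ + α * ((S₁ ∩ S₂).card : ℝ) / R₀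
        = α * S₁.card / R₀ + α * S₂.card / R₀ := by
      rw [← add_div, ← add_div, ← mul_add, ← mul_add, hcard]
    linarith [hsum, hcard']
end

section
/- Let N = {1,…,n} with n ≥ 1, and let v(S) = Σ_{i∈S} U_i − α|S|/R₀ − (β+γ)/R₀ for nonempty S ⊆ N, v(∅) = 0, where R₀ > 0, α > 0, β, γ ≥ 0. Define the payoff profile x_i = U_i − α/R₀ − (β+γ)/(n·R₀) for each i ∈ N. Then (x_1, …, x_n) lies in the core: Σ_{i∈N} x_i = v(N) and Σ_{i∈S} x_i ≥ v(S) for every S ⊆ N. -/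
/-- In the symmetric multicast game on `N = {1,…,n}`, the equal-cost-sharing payoff
profile `x i = U i - α/R₀ - (β+γ)/(n·R₀)` lies in the core. -/
theorem stmt2 (n : ℕ) (hn : 1 ≤ n) (U : ℕ → ℝ) (R₀ α β γ : ℝ)
    (hR₀ : 0 < R₀) (hα : 0 < α) (hβ : 0 ≤ β) (hγ : 0 ≤ γ)
    (v : Finset ℕ → ℝ) (hv0 : v ∅ = 0)
    (hv : ∀ S : Finset ℕ, S.Nonempty →
      v S = ∑ i ∈ S, U i - α * S.card / R₀ - (β + γ) / R₀)
    (x : ℕ → ℝ)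
    (hx : ∀ i, x i = U i - α / R₀ - (β + γ) / (n * R₀)) :
    ∑ i ∈ Finset.Icc 1 n, x i = v (Finset.Icc 1 n) ∧
      ∀ S ⊆ Finset.Icc 1 n, v S ≤ ∑ i ∈ S, x i := by
  have hn' : (0:ℝ) < n := by exact_mod_cast hn
  have hsum : ∀ S : Finset ℕ, ∑ i ∈ S, x i
      = ∑ i ∈ S, U i - α * S.card / R₀ - S.card * ((β + γ) / (n * R₀)) := by
    intro S
    simp only [hx, Finset.sum_sub_distrib, Finset.sum_const, nsmul_eq_mul]
    ring
  constructor
  · rw [hsum, hv _ ⟨1, by simp [hn]⟩, Nat.card_Icc]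
    have : (n + 1 - 1 : ℕ) = n := by omega
    rw [this]
    field_simp
  · intro S hS
    rcases S.eq_empty_or_nonempty with rfl | hne
    · simp [hv0]
    · rw [hsum, hv S hne]
      have hcard : (S.card : ℝ) ≤ n := by
        have := Finset.card_le_card hS
        rw [Nat.card_Icc] at this
        exact_mod_cast this.trans (by omega)
      have hpos : (0:ℝ) ≤ (β + γ) / (n * R₀) := by positivity
      have : (S.card : ℝ) * ((β + γ) / (n * R₀)) ≤ n * ((β + γ) / (n * R₀)) :=
        mul_le_mul_of_nonneg_right hcard hpos
      have h2 : (n:ℝ) * ((β + γ) / (n * R₀)) = (β + γ) / R₀ := by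
        field_simp
      linarith
end

section
/- Let N be a finite set of n ≥ 2 players with valuations U_i ∈ ℝ, rates R_i > 0, and receive-cost parameters α_i > 0, and let β, γ ≥ 0. For nonempty S ⊆ N define R_S = min_{i∈S} R_i and v(S) = Σ_{i∈S} U_i − Σ_{i∈S} α_i/R_S − (β+γ)/R_S; set v(∅) = 0. Let R_min = min_i R_i, R_max = max_i R_i, α_min = min_i α_i, α_max = max_i α_i. If R_max/R_min ≤ (n/(n−1)) · (α_min(n−1) + β + γ)/(α_max·n + β + γ), then the core of the game is non-empty. -/
lemma stmt3_poly (n t A amin amax c : ℝ) (hn : 2 ≤ n) (ht1 : 1 ≤ t) (ht2 : t ≤ n - 1)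
    (hamax : 0 < amax) (hle : amin ≤ amax) (hA0 : 0 ≤ A) (hA2 : A ≤ t * amax)
    (hc : 0 ≤ c) :
    (amin * (n - 1) + c) * (n * A + t * c) ≤ (n - 1) * (amax * n + c) * (A + c) := by
  nlinarith [mul_nonneg hc (sub_nonneg.mpr hA2), mul_nonneg (sub_nonneg.mpr ht2) (mul_nonneg hc hc),
    mul_nonneg (mul_nonneg hc hamax.le) (sub_nonneg.mpr ht2),
    mul_nonneg (sub_nonneg.mpr hle) (add_nonneg (mul_nonneg (by linarith : (0:ℝ) ≤ n) hA0) (mul_nonneg (by linarith : (0:ℝ) ≤ t) hc)),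
    mul_nonneg (mul_nonneg hc hamax.le) (by nlinarith : (0 : ℝ) ≤ (n-1)*(n-t) - t)]

/-- In the multicast game with heterogeneous rates `R i` and receive-costs `αp i`,
if `Rmax/Rmin ≤ (n/(n-1))·((αmin(n-1)+β+γ)/(αmax·n+β+γ))` then the core is non-empty. -/
theorem stmt3 {ι : Type*} [DecidableEq ι] (N : Finset ι) (hNne : N.Nonempty)
    (n : ℕ) (hn : 2 ≤ n) (hcard : N.card = n)
    (U R αp : ι → ℝ) (β γ : ℝ)
    (hR : ∀ i ∈ N, 0 < R i) (hαp : ∀ i ∈ N, 0 < αp i)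
    (hβ : 0 ≤ β) (hγ : 0 ≤ γ)
    (v : Finset ι → ℝ) (hv0 : v ∅ = 0)
    (hv : ∀ (S : Finset ι) (h : S.Nonempty),
      v S = ∑ i ∈ S, U i - (∑ i ∈ S, αp i) / S.inf' h R - (β + γ) / S.inf' h R)
    (Rmin Rmax αmin αmax : ℝ)
    (hRmin : Rmin = N.inf' hNne R) (hRmax : Rmax = N.sup' hNne R)
    (hαmin : αmin = N.inf' hNne αp) (hαmax : αmax = N.sup' hNne αp)
    (hcond : Rmax / Rmin ≤
      ((n : ℝ) / ((n : ℝ) - 1)) * ((αmin * ((n : ℝ) - 1) + β + γ) / (αmax * n + β + γ))) :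
    ∃ x : ι → ℝ, ∑ i ∈ N, x i = v N ∧ ∀ S ⊆ N, v S ≤ ∑ i ∈ S, x i := by
  have hnR : (2 : ℝ) ≤ (n : ℝ) := by exact_mod_cast hn
  set c : ℝ := β + γ with hcdef
  have hc0 : 0 ≤ c := add_nonneg hβ hγ
  -- positivity facts
  have hRminpos : 0 < Rmin := by
    obtain ⟨i0, hi0, hEq⟩ := N.exists_mem_eq_inf' hNne R
    rw [hRmin, hEq]; exact hR i0 hi0
  have hαmaxpos : 0 < αmax := by
    obtain ⟨i0, hi0⟩ := hNne
    calc (0:ℝ) < αp i0 := hαp i0 hi0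
    _ ≤ αmax := hαmax ▸ Finset.le_sup' αp hi0
  have hαminmax : αmin ≤ αmax := by
    obtain ⟨i0, hi0, hEq⟩ := N.exists_mem_eq_inf' hNne αp
    rw [hαmin, hEq, hαmax]; exact Finset.le_sup' αp hi0
  have hRmaxpos : 0 < Rmax := by
    obtain ⟨i0, hi0⟩ := hNne
    calc (0:ℝ) < R i0 := hR i0 hi0
    _ ≤ Rmax := hRmax ▸ Finset.le_sup' R hi0
  have hnne : (n : ℝ) ≠ 0 := by positivity
  -- the allocation
  set x : ι → ℝ := fun i => U i - αp i / Rmin - c / (n * Rmin) with hx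
  -- sum over any finset
  have hsum : ∀ T : Finset ι,
      ∑ i ∈ T, x i = ∑ i ∈ T, U i - (∑ i ∈ T, αp i) / Rmin - (T.card : ℝ) * (c / (n * Rmin)) := by
    intro T
    simp only [hx, Finset.sum_sub_distrib, Finset.sum_const, nsmul_eq_mul, Finset.sum_div]
  have hsumN : ∑ i ∈ N, x i = v N := by
    rw [hsum, hv N hNne, ← hRmin, hcard]
    have : (n : ℝ) * (c / (n * Rmin)) = c / Rmin := by
      field_simp
    rw [this]
  refine ⟨x, hsumN, ?_⟩
  intro S hS
  rcases S.eq_empty_or_nonempty with rfl | hSne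
  · simp [hv0]
  by_cases hSN : S = N
  · subst hSN; exact le_of_eq hsumN.symm
  -- proper nonempty coalition
  set A : ℝ := ∑ i ∈ S, αp i with hA
  set RS : ℝ := S.inf' hSne R with hRS
  have hcardS : S.card < n := hcard ▸ Finset.card_lt_card (hS.ssubset_of_ne hSN)
  set t : ℝ := (S.card : ℝ) with ht
  have ht1 : 1 ≤ t := by
    rw [ht]
    exact_mod_cast Finset.card_pos.mpr hSne
  have ht2 : t ≤ (n : ℝ) - 1 := by
    have : (S.card : ℝ) + 1 ≤ (n : ℝ) := by exact_mod_cast hcardS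
    linarith
  have hRSpos : 0 < RS := by
    obtain ⟨i0, hi0, hEq⟩ := S.exists_mem_eq_inf' hSne R
    rw [hRS, hEq]; exact hR i0 (hS hi0)
  have hRSmax : RS ≤ Rmax := by
    obtain ⟨i0, hi0, hEq⟩ := S.exists_mem_eq_inf' hSne R
    rw [hRS, hEq, hRmax]; exact Finset.le_sup' R (hS hi0)
  have hA0 : 0 ≤ A := Finset.sum_nonneg fun i hi => (hαp i (hS hi)).le
  have hA2 : A ≤ t * αmax := by
    have := Finset.sum_le_card_nsmul S αp αmax
      (fun i hi => hαmax ▸ Finset.le_sup' αp (hS hi))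
    simpa [ht, nsmul_eq_mul] using this
  -- key inequality from hcond
  have hden : (0:ℝ) < ((n : ℝ) - 1) * (αmax * n + c) := by
    have : (0:ℝ) < αmax * n + c := by positivity
    nlinarith
  rw [div_mul_div_comm, div_le_div_iff₀ hRminpos (by rw [hcdef] at hden; linarith [hden] : (0:ℝ) < ((n:ℝ) - 1) * (αmax * n + β + γ))] at hcond
  have hkey : Rmax * (((n:ℝ) - 1) * (αmax * n + c)) ≤ (n:ℝ) * (αmin * ((n:ℝ) - 1) + c) * Rmin := by
    rw [hcdef]; ring_nf; ring_nf at hcond; linarith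
  -- the core inequality for S
  have hpoly := stmt3_poly (n : ℝ) t A αmin αmax c hnR ht1 ht2 hαmaxpos hαminmax hA0 hA2 hc0
  have key : A / Rmin + t * (c / (n * Rmin)) ≤ (A + c) / RS := by
    have h1 : (A + c) / Rmax ≤ (A + c) / RS :=
      div_le_div_of_nonneg_left (by linarith) hRSpos hRSmax
    have hLHS : A / Rmin + t * (c / (n * Rmin)) = ((n:ℝ) * A + t * c) / ((n:ℝ) * Rmin) := by
      field_simp
    have h2 : ((n:ℝ) * A + t * c) / ((n:ℝ) * Rmin) ≤ (A + c) / Rmax := by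
      rw [div_le_div_iff₀ (by positivity) hRmaxpos]
      have hNAtc0 : (0:ℝ) ≤ (n:ℝ) * A + t * c := by positivity
      have h1' := mul_le_mul_of_nonneg_left hkey hNAtc0
      have h2' := mul_le_mul_of_nonneg_left hpoly (by positivity : (0:ℝ) ≤ (n:ℝ) * Rmin)
      have hchain : ((n:ℝ) * A + t * c) * Rmax * (((n:ℝ) - 1) * (αmax * n + c)) ≤
          (A + c) * ((n:ℝ) * Rmin) * (((n:ℝ) - 1) * (αmax * n + c)) := by
        ring_nf at h1' h2' ⊢
        linarith
      exact le_of_mul_le_mul_right hchain hden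
    calc A / Rmin + t * (c / (n * Rmin)) = ((n:ℝ) * A + t * c) / ((n:ℝ) * Rmin) := hLHS
      _ ≤ (A + c) / Rmax := h2
      _ ≤ (A + c) / RS := h1
  rw [hv S hSne, hsum, ← hRS, ← hA, ← ht]
  have hadd : (A + c) / RS = A / RS + c / RS := add_div _ _ _
  rw [hadd] at key
  linarith
end

section
/- Let N be a finite set of n ≥ 2 players with valuations U_i ∈ ℝ, rates R_i > 0, common receive-cost α > 0, and parameters β, γ ≥ 0. For nonempty S ⊆ N define v(S) = Σ_{i∈S} U_i − α|S|/R_S − (β+γ)/R_S where R_S = min_{i∈S} R_i. Let k be a user attaining the minimum rate R_k = min_{i∈N} R_i, let N' = N \ {k}, and suppose min_{i∈N'} R_i = λ·R_k with λ ≥ 1. If λ > 1 + (β+γ)/(α(n−1)), then v(N') + v({k}) > v(N), and consequently the core of the game is empty. -/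
/-- If the ratio `λ` between the second-minimum and minimum data rate exceeds
`1 + (β+γ)/(α(n-1))`, then `v(N \ {k}) + v({k}) > v(N)` and the core is empty. -/
theorem stmt4 {ι : Type*} [DecidableEq ι] (N : Finset ι)
    (n : ℕ) (hn : 2 ≤ n) (hcard : N.card = n)
    (U R : ι → ℝ) (α β γ lam : ℝ)
    (hR : ∀ i ∈ N, 0 < R i) (hα : 0 < α) (hβ : 0 ≤ β) (hγ : 0 ≤ γ)
    (v : Finset ι → ℝ) (hv0 : v ∅ = 0)
    (hv : ∀ (S : Finset ι) (h : S.Nonempty),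
      v S = ∑ i ∈ S, U i - α * S.card / S.inf' h R - (β + γ) / S.inf' h R)
    (k : ι) (hk : k ∈ N) (hkmin : ∀ i ∈ N, R k ≤ R i)
    (hN' : (N.erase k).Nonempty)
    (hlam1 : 1 ≤ lam)
    (hlam : (N.erase k).inf' hN' R = lam * R k)
    (hcond : lam > 1 + (β + γ) / (α * ((n : ℝ) - 1))) :
    v (N.erase k) + v {k} > v N ∧
      ¬∃ x : ι → ℝ, ∑ i ∈ N, x i = v N ∧ ∀ S ⊆ N, v S ≤ ∑ i ∈ S, x i := by
  have hNne : N.Nonempty := ⟨k, hk⟩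
  have hRk : 0 < R k := hR k hk
  have hinfN : N.inf' hNne R = R k :=
    le_antisymm (Finset.inf'_le _ hk) (Finset.le_inf' _ _ hkmin)
  have hcardN' : (N.erase k).card = n - 1 := by
    rw [Finset.card_erase_of_mem hk, hcard]
  have hn1 : (1:ℝ) ≤ (n:ℝ) - 1 := by
    have : (2:ℝ) ≤ (n:ℝ) := by exact_mod_cast hn
    linarith
  have hcastc : ((N.erase k).card : ℝ) = (n:ℝ) - 1 := by
    rw [hcardN', Nat.cast_sub (by omega)]; norm_num
  have hlampos : 0 < lam := by linarith
  have h1 : β + γ < α * ((n:ℝ) - 1) * (lam - 1) := by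
    have hpos : 0 < α * ((n:ℝ) - 1) := by nlinarith
    have := (div_lt_iff₀ hpos).mp (by linarith : (β + γ) / (α * ((n:ℝ) - 1)) < lam - 1)
    linarith
  have hsumU : ∑ i ∈ N.erase k, U i + U k = ∑ i ∈ N, U i :=
    Finset.sum_erase_add N U hk
  have key : v (N.erase k) + v {k} > v N := by
    rw [hv N hNne, hv (N.erase k) hN', hv {k} ⟨k, Finset.mem_singleton_self k⟩,
      hinfN, hlam, Finset.inf'_singleton, Finset.sum_singleton, Finset.card_singleton,
      hcastc, hcard]
    have hRk' : (R k) ≠ 0 := ne_of_gt hRk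
    have hlam' : lam ≠ 0 := ne_of_gt hlampos
    rw [gt_iff_lt, ← sub_pos]
    have : ∑ i ∈ N.erase k, U i - α * ((n:ℝ) - 1) / (lam * R k) - (β + γ) / (lam * R k) +
        (U k - α * (1:ℕ) / R k - (β + γ) / R k) -
        (∑ i ∈ N, U i - α * (n:ℝ) / R k - (β + γ) / R k)
      = (α * ((n:ℝ) - 1) * (lam - 1) - (β + γ)) / (lam * R k) := by
      field_simp
      rw [← hsumU]; push_cast; ring
    rw [this]
    apply div_pos (by linarith) (by positivity)
  refine ⟨key, ?_⟩
  rintro ⟨x, hsum, hcore⟩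
  have h2 := hcore (N.erase k) (Finset.erase_subset _ _)
  have h3 := hcore {k} (Finset.singleton_subset_iff.mpr hk)
  rw [Finset.sum_singleton] at h3
  have h4 : ∑ i ∈ N.erase k, x i + x k = ∑ i ∈ N, x i :=
    Finset.sum_erase_add N x hk
  linarith
end

section
/- Let N be a finite set of n ≥ 2 players with valuations U_i ∈ ℝ, rates R_i > 0, common receive-cost α > 0, and β, γ ≥ 0. Define v(S) = Σ_{i∈S} U_i − α|S|/R_S − (β+γ)/R_S for nonempty S ⊆ N, where R_S = min_{i∈S} R_i. Let k attain the minimum rate R_k = min_{i∈N} R_i and let m attain the maximum rate R_m = max_{i∈N} R_i with R_m = μ·R_k, μ ≥ 1, and suppose k ≠ m. If μ > 1 + (β+γ)/α, then v(N \ {m}) + v({m}) > v(N), and hence the core of the game is empty. -/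
/-- If the ratio `μ` between the maximum and minimum data rate exceeds
`1 + (β+γ)/α`, then `v(N \ {m}) + v({m}) > v(N)` and the core is empty. -/
theorem stmt5 {ι : Type*} [DecidableEq ι] (N : Finset ι)
    (n : ℕ) (hn : 2 ≤ n) (hcard : N.card = n)
    (U R : ι → ℝ) (α β γ μ : ℝ)
    (hR : ∀ i ∈ N, 0 < R i) (hα : 0 < α) (hβ : 0 ≤ β) (hγ : 0 ≤ γ)
    (v : Finset ι → ℝ) (hv0 : v ∅ = 0)
    (hv : ∀ (S : Finset ι) (h : S.Nonempty),
      v S = ∑ i ∈ S, U i - α * S.card / S.inf' h R - (β + γ) / S.inf' h R)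
    (k m : ι) (hk : k ∈ N) (hm : m ∈ N) (hkm : k ≠ m)
    (hkmin : ∀ i ∈ N, R k ≤ R i) (hmmax : ∀ i ∈ N, R i ≤ R m)
    (hμ1 : 1 ≤ μ) (hμ : R m = μ * R k)
    (hcond : μ > 1 + (β + γ) / α) :
    v (N.erase m) + v {m} > v N ∧
      ¬∃ x : ι → ℝ, ∑ i ∈ N, x i = v N ∧ ∀ S ⊆ N, v S ≤ ∑ i ∈ S, x i := by
  have hRk : 0 < R k := hR k hk
  have hRm : 0 < R m := hR m hm
  have hNne : N.Nonempty := ⟨k, hk⟩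
  have hk' : k ∈ N.erase m := Finset.mem_erase.mpr ⟨hkm, hk⟩
  have hEne : (N.erase m).Nonempty := ⟨k, hk'⟩
  have hmne : ({m} : Finset ι).Nonempty := Finset.singleton_nonempty m
  have hinfN : N.inf' hNne R = R k :=
    le_antisymm (Finset.inf'_le _ hk) (Finset.le_inf' _ _ hkmin)
  have hinfE : (N.erase m).inf' hEne R = R k :=
    le_antisymm (Finset.inf'_le _ hk')
      (Finset.le_inf' _ _ fun i hi => hkmin i (Finset.mem_of_mem_erase hi))
  have hinfm : ({m} : Finset ι).inf' hmne R = R m := by simp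
  have hcardE : (N.erase m).card = n - 1 := by
    rw [Finset.card_erase_of_mem hm, hcard]
  have hsumU : ∑ i ∈ N.erase m, U i + U m = ∑ i ∈ N, U i :=
    Finset.sum_erase_add N U hm
  have hμpos : 0 < μ := lt_of_lt_of_le one_pos hμ1
  have key : α + (β + γ) < α * μ := by
    have h := (div_lt_iff₀ hα).mp (by linarith : (β + γ) / α < μ - 1)
    nlinarith
  have hmain : v (N.erase m) + v {m} > v N := by
    rw [hv N hNne, hv (N.erase m) hEne, hv {m} hmne, hinfN, hinfE, hinfm,
      Finset.sum_singleton, hcardE, Finset.card_singleton, hcard, hμ]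
    have hcast : ((n - 1 : ℕ) : ℝ) = (n : ℝ) - 1 := by
      have : 1 ≤ n := by omega
      push_cast [this]; ring
    rw [hcast]
    rw [gt_iff_lt, ← sub_pos]
    have : (∑ i ∈ N.erase m, U i - α * ((n : ℝ) - 1) / R k - (β + γ) / R k +
        (U m - α * (1 : ℕ) / (μ * R k) - (β + γ) / (μ * R k))) -
        (∑ i ∈ N, U i - α * (n : ℝ) / R k - (β + γ) / R k)
        = (α * μ - α - (β + γ)) / (μ * R k) := by
      rw [← hsumU]
      field_simp
      ring
    rw [this]
    apply div_pos (by linarith) (by positivity)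
  refine ⟨hmain, ?_⟩
  rintro ⟨x, hsum, hx⟩
  have h1 := hx (N.erase m) (Finset.erase_subset _ _)
  have h2 := hx {m} (Finset.singleton_subset_iff.mpr hm)
  rw [Finset.sum_singleton] at h2
  have h3 : ∑ i ∈ N.erase m, x i + x m = ∑ i ∈ N, x i :=
    Finset.sum_erase_add N x hm
  linarith
end

section
/- Let N = {1,…,n} with rates R_i > 0, receive-cost parameters α_i > 0, valuations U_i ∈ ℝ, and β, γ ≥ 0. Define v(S) = Σ_{i∈S} U_i − Σ_{i∈S} α_i/R_S − (β+γ)/R_S for nonempty S, where R_S = min_{i∈S} R_i, and v(∅) = 0. Suppose R_{i+1}/R_i ≥ (α_{i+1} + β + γ)/α_{i+1} for all i ∈ {1,…,n−1}. Then for every nonempty coalition S ⊆ N, Σ_{i∈N} v(S ∩ {i}) ≥ v(S); i.e., the partition of N into singletons is D_c-stable. -/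
/-- If `R (i+1) / R i ≥ (α (i+1) + β + γ)/α (i+1)` for all consecutive users,
then the singleton partition of `N = {1,…,n}` is `D_c`-stable:
`∑_{i∈N} v (S ∩ {i}) ≥ v S` for every nonempty coalition `S ⊆ N`. -/
theorem stmt6 (n : ℕ) (U R αp : ℕ → ℝ) (β γ : ℝ)
    (hR : ∀ i, 0 < R i) (hαp : ∀ i, 0 < αp i) (hβ : 0 ≤ β) (hγ : 0 ≤ γ)
    (v : Finset ℕ → ℝ) (hv0 : v ∅ = 0)
    (hv : ∀ (S : Finset ℕ) (h : S.Nonempty),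
      v S = ∑ i ∈ S, U i - (∑ i ∈ S, αp i) / S.inf' h R - (β + γ) / S.inf' h R)
    (hratio : ∀ i, 1 ≤ i → i + 1 ≤ n →
      R (i + 1) / R i ≥ (αp (i + 1) + β + γ) / αp (i + 1)) :
    ∀ S ⊆ Finset.Icc 1 n, S.Nonempty →
      ∑ i ∈ Finset.Icc 1 n, v (S ∩ {i}) ≥ v S := by
  have hstep : ∀ i, 1 ≤ i → i + 1 ≤ n → R i ≤ R (i + 1) := by
    intro i h1 h2
    have h := hratio i h1 h2
    have h1' : (1:ℝ) ≤ (αp (i+1) + β + γ) / αp (i+1) := by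
      rw [le_div_iff₀ (hαp (i+1))]
      linarith
    have h2' : (1:ℝ) ≤ R (i+1) / R i := le_trans h1' h
    rw [le_div_iff₀ (hR i)] at h2'
    linarith
  have hmono : ∀ a b, 1 ≤ a → a ≤ b → b ≤ n → R a ≤ R b := by
    intro a b h1 hab hbn
    induction b, hab using Nat.le_induction with
    | base => exact le_refl _
    | succ b hab ih =>
      exact le_trans (ih (le_trans (Nat.le_succ b) hbn)) (hstep b (le_trans h1 hab) hbn)
  have hkey : ∀ m i, 1 ≤ m → m < i → i ≤ n → (αp i + β + γ) / R i ≤ αp i / R m := by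
    intro m i hm hmi hin
    obtain ⟨j, rfl⟩ : ∃ j, i = j + 1 := ⟨i - 1, by omega⟩
    have hj1 : 1 ≤ j := by omega
    have hr := hratio j hj1 hin
    have hRj := hR j
    have hRj1 := hR (j+1)
    have hRm := hR m
    have hα := hαp (j+1)
    have h1 : (αp (j+1) + β + γ) * R j ≤ αp (j+1) * R (j+1) := by
      rw [ge_iff_le, div_le_div_iff₀ hα hRj] at hr
      linarith
    have hmj : R m ≤ R j := hmono m j hm (by omega) (by omega)
    have h2 : (αp (j+1) + β + γ) / R (j+1) ≤ αp (j+1) / R j := by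
      rw [div_le_div_iff₀ hRj1 hRj]
      linarith
    have h3 : αp (j+1) / R j ≤ αp (j+1) / R m :=
      div_le_div_of_nonneg_left (le_of_lt hα) hRm hmj
    linarith
  intro S hS hSne
  set m := S.min' hSne with hm
  have hmS : m ∈ S := S.min'_mem hSne
  have hmIcc := hS hmS
  rw [Finset.mem_Icc] at hmIcc
  have hinf : S.inf' hSne R = R m := by
    apply le_antisymm
    · exact Finset.inf'_le R hmS
    · apply Finset.le_inf'
      intro i hi
      have hiIcc := hS hi
      rw [Finset.mem_Icc] at hiIcc
      exact hmono m i hmIcc.1 (S.min'_le i hi) hiIcc.2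
  have hsum : ∑ i ∈ Finset.Icc 1 n, v (S ∩ {i}) = ∑ i ∈ S, v {i} := by
    rw [← Finset.sum_subset hS]
    · apply Finset.sum_congr rfl
      intro i hi
      congr 1
      ext j
      simp only [Finset.mem_inter, Finset.mem_singleton]
      constructor
      · rintro ⟨_, rfl⟩; rfl
      · rintro rfl; exact ⟨hi, rfl⟩
    · intro i _ hiS
      have he : S ∩ {i} = ∅ := by
        ext j
        simp only [Finset.mem_inter, Finset.mem_singleton, Finset.notMem_empty, iff_false,
          not_and]
        rintro hjS rfl; exact hiS hjS
      rw [he, hv0]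
  have hvi : ∀ i ∈ S, v {i} = U i - (αp i / R i + (β+γ)/R i) := by
    intro i hi
    rw [hv {i} (Finset.singleton_nonempty i)]
    simp only [Finset.sum_singleton, Finset.inf'_singleton]
    ring
  rw [hsum, hv S hSne, hinf, Finset.sum_congr rfl hvi, Finset.sum_sub_distrib]
  have hRm := hR m
  have hmain : ∑ i ∈ S, (αp i / R i + (β+γ)/R i) ≤ (∑ i ∈ S, αp i) / R m + (β+γ)/R m := by
    rw [Finset.sum_div, ← Finset.add_sum_erase S _ hmS, ← Finset.add_sum_erase S _ hmS]
    have hterm : ∑ i ∈ S.erase m, (αp i / R i + (β+γ)/R i) ≤ ∑ i ∈ S.erase m, αp i / R m := by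
      apply Finset.sum_le_sum
      intro i hi
      have hiS := Finset.mem_of_mem_erase hi
      have hne := Finset.ne_of_mem_erase hi
      have hiIcc := hS hiS
      rw [Finset.mem_Icc] at hiIcc
      have hmi : m < i := lt_of_le_of_ne (S.min'_le i hiS) (Ne.symm hne)
      have h1 := hkey m i hmIcc.1 hmi hiIcc.2
      have h2 : αp i / R i + (β + γ) / R i = (αp i + β + γ) / R i := by ring
      linarith
    linarith
  linarith
end

section
/- Let S₁, S₂, …, S_k (k ≥ 2) be pairwise disjoint nonempty subsets of a part P_j of a partition, with player parameters U_i ∈ ℝ, rates R_i ∈ [R_min, R_max] with 0 < R_min ≤ R_max, receive-costs α_i ∈ [α_lo, α_hi] with 0 < α_lo ≤ α_hi, and β, γ ≥ 0. Define v(S) = Σ_{i∈S} U_i − Σ_{i∈S} α_i/R_S − (β+γ)/R_S with R_S = min_{i∈S} R_i. Let m = |S₁|+⋯+|S_k|. If R_max/R_min ≤ (α_lo·m + k(β+γ))/(α_hi·m + β + γ), then v(S₁ ∪ ⋯ ∪ S_k) ≥ Σ_{i=1}^k v(S_i). -/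
/-- Merging pairwise disjoint sub-coalitions `S 1, …, S k` inside one part `Pj`
is beneficial when `Rmax/Rmin ≤ (αlo·m + k(β+γ))/(αhi·m + β+γ)`,
where `m = |S₁| + ⋯ + |S_k|`. -/
theorem stmt7 {ι : Type*} [DecidableEq ι] (k : ℕ) (hk : 2 ≤ k)
    (Pj : Finset ι) (S : Fin k → Finset ι)
    (hSne : ∀ i, (S i).Nonempty) (hSsub : ∀ i, S i ⊆ Pj)
    (hdisj : ∀ i j, i ≠ j → Disjoint (S i) (S j))
    (U R αp : ι → ℝ) (Rmin Rmax αlo αhi β γ : ℝ)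
    (hRmin : 0 < Rmin) (hRR : Rmin ≤ Rmax)
    (hRrange : ∀ x ∈ Pj, R x ∈ Set.Icc Rmin Rmax)
    (hαlo : 0 < αlo) (hαα : αlo ≤ αhi)
    (hαrange : ∀ x ∈ Pj, αp x ∈ Set.Icc αlo αhi)
    (hβ : 0 ≤ β) (hγ : 0 ≤ γ)
    (v : Finset ι → ℝ) (hv0 : v ∅ = 0)
    (hv : ∀ (T : Finset ι) (h : T.Nonempty),
      v T = ∑ i ∈ T, U i - (∑ i ∈ T, αp i) / T.inf' h R - (β + γ) / T.inf' h R)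
    (m : ℕ) (hm : (m : ℝ) = ∑ i : Fin k, ((S i).card : ℝ))
    (hcond : Rmax / Rmin ≤ (αlo * m + k * (β + γ)) / (αhi * m + β + γ)) :
    v (Finset.univ.biUnion S) ≥ ∑ i : Fin k, v (S i) := by
  have hkpos : 0 < k := by omega
  haveI : NeZero k := ⟨by omega⟩
  set T : Finset ι := Finset.univ.biUnion S with hT
  have hTne : T.Nonempty := ⟨(hSne 0).choose,
    Finset.mem_biUnion.2 ⟨0, Finset.mem_univ _, (hSne 0).choose_spec⟩⟩
  have hTsub : T ⊆ Pj := Finset.biUnion_subset.2 fun i _ => hSsub i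
  have hdisj' : ∀ i ∈ (Finset.univ : Finset (Fin k)), ∀ j ∈ Finset.univ,
      i ≠ j → Disjoint (S i) (S j) := fun i _ j _ h => hdisj i j h
  have hRmax : 0 < Rmax := lt_of_lt_of_le hRmin hRR
  have hcardT : (T.card : ℝ) = m := by
    rw [hm, hT, Finset.card_biUnion hdisj']; push_cast; ring
  -- inf' bounds
  have hinf : ∀ (W : Finset ι) (h : W.Nonempty), W ⊆ Pj →
      Rmin ≤ W.inf' h R ∧ W.inf' h R ≤ Rmax := by
    intro W h hW
    obtain ⟨x, hx, hxe⟩ := Finset.exists_mem_eq_inf' h R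
    refine ⟨Finset.le_inf' h R fun y hy => (hRrange y (hW hy)).1, ?_⟩
    rw [hxe]; exact (hRrange x (hW hx)).2
  -- α sum bounds
  have hαsum : ∀ (W : Finset ι), W ⊆ Pj →
      αlo * W.card ≤ ∑ i ∈ W, αp i ∧ (∑ i ∈ W, αp i) ≤ αhi * W.card := by
    intro W hW
    constructor
    · calc αlo * W.card = ∑ _i ∈ W, αlo := by
            rw [Finset.sum_const, nsmul_eq_mul, mul_comm]
        _ ≤ ∑ i ∈ W, αp i := Finset.sum_le_sum fun i hi => (hαrange i (hW hi)).1
    · calc (∑ i ∈ W, αp i) ≤ ∑ _i ∈ W, αhi :=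
            Finset.sum_le_sum fun i hi => (hαrange i (hW hi)).2
        _ = αhi * W.card := by rw [Finset.sum_const, nsmul_eq_mul, mul_comm]
  have hm1 : (1:ℝ) ≤ m := by
    rw [hm]
    calc (1:ℝ) ≤ ((S 0).card : ℝ) := by
          exact_mod_cast Finset.card_pos.2 (hSne 0)
      _ ≤ _ := Finset.single_le_sum (f := fun i => ((S i).card : ℝ))
          (fun i _ => by positivity) (Finset.mem_univ 0)
  set RT := T.inf' hTne R with hRT
  have hRTb := hinf T hTne hTsub
  have hAT := hαsum T hTsub
  -- key bound on whole coalition cost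
  have h1 : ((∑ i ∈ T, αp i) + (β + γ)) / RT ≤ (αhi * m + (β + γ)) / Rmin := by
    have hαhi : 0 < αhi := lt_of_lt_of_le hαlo hαα
    apply div_le_div₀ (by nlinarith) _ hRmin hRTb.1
    have := hAT.2; rw [hcardT] at this; linarith
  have hD : 0 < αhi * m + β + γ := by nlinarith
  have h2 : (αhi * m + (β + γ)) / Rmin ≤ (αlo * m + k * (β + γ)) / Rmax := by
    rw [div_le_div_iff₀ hRmin hRmax]
    rw [div_le_div_iff₀ hRmin hD] at hcond
    nlinarith
  -- termwise bound on parts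
  have h3 : (αlo * m + k * (β + γ)) / Rmax ≤
      ∑ j : Fin k, ((∑ i ∈ S j, αp i) + (β + γ)) / (S j).inf' (hSne j) R := by
    have step : ∀ j : Fin k, (αlo * (S j).card + (β + γ)) / Rmax ≤
        ((∑ i ∈ S j, αp i) + (β + γ)) / (S j).inf' (hSne j) R := by
      intro j
      have hb := hinf (S j) (hSne j) (hSsub j)
      have ha := hαsum (S j) (hSsub j)
      have hc : (0:ℝ) ≤ αlo * (S j).card := by positivity
      apply div_le_div₀ (by linarith [ha.1]) (by linarith [ha.1]) (lt_of_lt_of_le hRmin hb.1) hb.2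
    calc (αlo * m + k * (β + γ)) / Rmax
        = ∑ j : Fin k, (αlo * (S j).card + (β + γ)) / Rmax := by
          rw [← Finset.sum_div, Finset.sum_add_distrib, ← Finset.mul_sum, ← hm,
            Finset.sum_const, nsmul_eq_mul]
          simp
      _ ≤ _ := Finset.sum_le_sum fun j _ => step j
  -- sums split over the biUnion
  have hUsum : ∑ i ∈ T, U i = ∑ j : Fin k, ∑ i ∈ S j, U i :=
    Finset.sum_biUnion (fun i _ j _ h => hdisj i j h)
  have hαsplit : ∑ i ∈ T, αp i = ∑ j : Fin k, ∑ i ∈ S j, αp i :=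
    Finset.sum_biUnion (fun i _ j _ h => hdisj i j h)
  rw [hv T hTne]
  have hvS : ∀ j : Fin k, v (S j) = ∑ i ∈ S j, U i
      - (∑ i ∈ S j, αp i) / (S j).inf' (hSne j) R - (β + γ) / (S j).inf' (hSne j) R :=
    fun j => hv (S j) (hSne j)
  calc ∑ j : Fin k, v (S j)
      = ∑ j : Fin k, (∑ i ∈ S j, U i
          - ((∑ i ∈ S j, αp i) + (β + γ)) / (S j).inf' (hSne j) R) := by
        refine Finset.sum_congr rfl fun j _ => ?_
        rw [hvS j, add_div]; ring
    _ = ∑ j : Fin k, ∑ i ∈ S j, U i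
          - ∑ j : Fin k, ((∑ i ∈ S j, αp i) + (β + γ)) / (S j).inf' (hSne j) R := by
        rw [Finset.sum_sub_distrib]
    _ ≤ ∑ i ∈ T, U i - ((∑ i ∈ T, αp i) + (β + γ)) / RT := by
        rw [hUsum]
        have := le_trans h1 (le_trans h2 h3)
        linarith
    _ = ∑ i ∈ T, U i - (∑ i ∈ T, αp i) / T.inf' hTne R - (β + γ) / T.inf' hTne R := by
        rw [← hRT, add_div]; ring
end

section
/- Let N = {1,…,n}, n ≥ 2, with rates R_i > 0 satisfying R_{i+1}/R_i ≥ (α_{i+1} + β + γ)/α_{i+1} for all i < n, where α_i > 0 and β, γ ≥ 0, and valuations U_i ∈ ℝ. Define v(S) = Σ_{i∈S} U_i − Σ_{i∈S} α_i/R_S − (β+γ)/R_S for nonempty S with R_S = min_{i∈S} R_i. Then for any nonempty S ⊆ N with |S| ≥ 2 and minimum element i₁ = min S, Σ_{j∈S, j≠i₁} (α_j/R_j)·(R_j/R_{i₁} − 1 − (β+γ)/α_j) ≥ 0, and consequently Σ_{i∈S} v({i}) − v(S) ≥ 0. -/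
/-- Under the consecutive-rate-ratio condition, for any coalition `S ⊆ {1,…,n}`
with at least two members and minimum element `i₁ = min S`, the sum
`∑_{j∈S, j≠i₁} (α_j/R_j)(R_j/R_{i₁} − 1 − (β+γ)/α_j)` is nonnegative, and
consequently `∑_{i∈S} v({i}) − v(S) ≥ 0`. -/
theorem stmt13 (n : ℕ) (hn : 2 ≤ n) (U R αp : ℕ → ℝ) (β γ : ℝ)
    (hR : ∀ i, 0 < R i) (hαp : ∀ i, 0 < αp i) (hβ : 0 ≤ β) (hγ : 0 ≤ γ)
    (hratio : ∀ i, 1 ≤ i → i + 1 ≤ n →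
      R (i + 1) / R i ≥ (αp (i + 1) + β + γ) / αp (i + 1))
    (v : Finset ℕ → ℝ) (hv0 : v ∅ = 0)
    (hv : ∀ (S : Finset ℕ) (h : S.Nonempty),
      v S = ∑ i ∈ S, U i - (∑ i ∈ S, αp i) / S.inf' h R - (β + γ) / S.inf' h R) :
    ∀ S ⊆ Finset.Icc 1 n, ∀ hS : S.Nonempty, 2 ≤ S.card →
      0 ≤ ∑ j ∈ S.erase (S.min' hS),
            (αp j / R j) * (R j / R (S.min' hS) - 1 - (β + γ) / αp j) ∧
      0 ≤ (∑ i ∈ S, v {i}) - v S := by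
  intro S hSub hS hcard
  set m := S.min' hS with hm
  have hmS : m ∈ S := S.min'_mem hS
  have hmem : ∀ i ∈ S, 1 ≤ i ∧ i ≤ n := by
    intro i hi
    simpa [Finset.mem_Icc] using hSub hi
  have hm1 : 1 ≤ m := (hmem m hmS).1
  have hR1 : ∀ i, 1 ≤ i → i + 1 ≤ n → R i ≤ R (i + 1) := by
    intro i hi hin
    have h := hratio i hi hin
    have h1 : (1 : ℝ) ≤ (αp (i + 1) + β + γ) / αp (i + 1) := by
      rw [le_div_iff₀ (hαp _)]
      linarith
    exact (one_le_div (hR i)).mp (le_trans h1 h)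
  have hmono : ∀ b a, 1 ≤ a → a ≤ b → b ≤ n → R a ≤ R b := by
    intro b
    induction b with
    | zero => intro a h1 h2 h3; omega
    | succ k ih =>
      intro a h1 h2 h3
      rcases eq_or_lt_of_le h2 with he | hlt
      · rw [he]
      · have hak : a ≤ k := Nat.lt_succ_iff.mp hlt
        have h1k : 1 ≤ k := le_trans h1 hak
        exact le_trans (ih a h1 hak (by omega)) (hR1 k h1k h3)
  have hkey : ∀ j ∈ S.erase m,
      0 ≤ (αp j / R j) * (R j / R m - 1 - (β + γ) / αp j) := by
    intro j hj
    have hjS : j ∈ S := Finset.mem_of_mem_erase hj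
    have hjm : j ≠ m := Finset.ne_of_mem_erase hj
    have hmj : m < j := lt_of_le_of_ne (S.min'_le j hjS) (Ne.symm hjm)
    obtain ⟨k, rfl⟩ : ∃ k, j = k + 1 := ⟨j - 1, by omega⟩
    have hk1 : 1 ≤ k := by omega
    have hkn : k + 1 ≤ n := (hmem _ hjS).2
    have hRmk : R m ≤ R k := hmono k m hm1 (by omega) (by omega)
    have hdiv : R (k + 1) / R k ≤ R (k + 1) / R m := by
      gcongr
      · exact le_of_lt (hR (k + 1))
      · exact hR m
    have hrat := hratio k hk1 hkn
    have heq : (αp (k + 1) + β + γ) / αp (k + 1) = 1 + (β + γ) / αp (k + 1) := by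
      rw [add_div, add_div, add_div, div_self (hαp (k + 1)).ne']
      ring
    have h2 : 0 ≤ R (k + 1) / R m - 1 - (β + γ) / αp (k + 1) := by
      have := le_trans hrat hdiv
      rw [heq] at this
      linarith
    exact mul_nonneg (le_of_lt (div_pos (hαp _) (hR _))) h2
  have part1 : 0 ≤ ∑ j ∈ S.erase m,
      (αp j / R j) * (R j / R m - 1 - (β + γ) / αp j) :=
    Finset.sum_nonneg hkey
  refine ⟨part1, ?_⟩
  have hinf : S.inf' hS R = R m := by
    apply le_antisymm
    · exact Finset.inf'_le R hmS
    · exact Finset.le_inf' hS R fun i hi =>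
        hmono i m hm1 (S.min'_le i hi) (hmem i hi).2
  have hvi : ∀ i ∈ S, v {i} = U i - αp i / R i - (β + γ) / R i := by
    intro i hi
    rw [hv {i} (Finset.singleton_nonempty i)]
    simp
  have key : (∑ i ∈ S, v {i}) - v S
      = ∑ j ∈ S.erase m, (αp j / R j) * (R j / R m - 1 - (β + γ) / αp j) := by
    rw [hv S hS, hinf, Finset.sum_congr rfl hvi]
    have hterm : ∀ j ∈ S.erase m,
        (αp j / R j) * (R j / R m - 1 - (β + γ) / αp j)
          = αp j / R m - αp j / R j - (β + γ) / R j := by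
      intro j hj
      have h1 := (hR j).ne'
      have h2 := (hR m).ne'
      have h3 := (hαp j).ne'
      field_simp
    rw [Finset.sum_congr rfl hterm]
    have e1 : ∑ i ∈ S, (U i - αp i / R i - (β + γ) / R i)
        = ∑ i ∈ S, U i - ∑ i ∈ S, (αp i / R i) - ∑ i ∈ S, ((β + γ) / R i) := by
      rw [Finset.sum_sub_distrib, Finset.sum_sub_distrib]
    have e2 : (∑ i ∈ S, αp i) / R m = ∑ i ∈ S, (αp i / R m) := by rw [Finset.sum_div]
    have e3 : ∑ i ∈ S, (αp i / R m - αp i / R i - (β + γ) / R i)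
        = ∑ i ∈ S, (αp i / R m) - ∑ i ∈ S, (αp i / R i)
          - ∑ i ∈ S, ((β + γ) / R i) := by
      rw [Finset.sum_sub_distrib, Finset.sum_sub_distrib]
    have split : (αp m / R m - αp m / R m - (β + γ) / R m)
        + ∑ j ∈ S.erase m, (αp j / R m - αp j / R j - (β + γ) / R j)
        = ∑ i ∈ S, (αp i / R m - αp i / R i - (β + γ) / R i) :=
      Finset.add_sum_erase S (fun i => αp i / R m - αp i / R i - (β + γ) / R i) hmS
    linarith [e1, e2, e3, split]
  rw [key]
  exact part1
end

section
/- Let N = {1,…,n}, n ≥ 2, with value function v(S) = Σ_{i∈S} U_i − Σ_{i∈S} α_i/R_S − (β+γ)/R_S for nonempty S ⊆ N, where R_S = min_{i∈S} R_i, R_i > 0, α_i > 0, β, γ ≥ 0, U_i ∈ ℝ. Fix any proper nonempty subset S ⊊ N, let R_min = min_{i∈N} R_i, R_max = max_{i∈N} R_i, α_min = min_i α_i, α_max = max_i α_i. If R_max/R_min ≤ (n/|S|)·(α_min|S| + β + γ)/(α_max·n + β + γ), then Σ_{i∈S} U_i − |S|(α_max·n + β + γ)/(n·R_min) ≥ v(S).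 -/
/-- Key step for non-emptiness of the core: for a proper nonempty coalition
`S ⊊ N = {1,…,n}`, under the rate-disparity bound the candidate core payoff of
`S` is at least `v S`. -/
theorem stmt15 (n : ℕ) (hn : 2 ≤ n) (U R αp : ℕ → ℝ) (β γ : ℝ)
    (hR : ∀ i, 0 < R i) (hαp : ∀ i, 0 < αp i) (hβ : 0 ≤ β) (hγ : 0 ≤ γ)
    (v : Finset ℕ → ℝ) (hv0 : v ∅ = 0)
    (hv : ∀ (T : Finset ℕ) (h : T.Nonempty),
      v T = ∑ i ∈ T, U i - (∑ i ∈ T, αp i) / T.inf' h R - (β + γ) / T.inf' h R)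
    (hNne : (Finset.Icc 1 n).Nonempty)
    (S : Finset ℕ) (hS : S ⊆ Finset.Icc 1 n) (hSne : S.Nonempty)
    (hproper : S ≠ Finset.Icc 1 n)
    (Rmin Rmax αmin αmax : ℝ)
    (hRmin : Rmin = (Finset.Icc 1 n).inf' hNne R)
    (hRmax : Rmax = (Finset.Icc 1 n).sup' hNne R)
    (hαmin : αmin = (Finset.Icc 1 n).inf' hNne αp)
    (hαmax : αmax = (Finset.Icc 1 n).sup' hNne αp)
    (hcond : Rmax / Rmin ≤
      ((n : ℝ) / (S.card : ℝ)) * ((αmin * S.card + β + γ) / (αmax * n + β + γ))) :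
    (∑ i ∈ S, U i) - S.card * (αmax * n + β + γ) / (n * Rmin) ≥ v S := by
  rw [hv S hSne]
  set Rs := S.inf' hSne R with hRs
  -- positivity facts
  have hRmin0 : 0 < Rmin := by
    rw [hRmin]
    obtain ⟨j, hj, hje⟩ := Finset.exists_mem_eq_inf' hNne R
    rw [hje]; exact hR j
  have hRs0 : 0 < Rs := by
    obtain ⟨j, hj, hje⟩ := Finset.exists_mem_eq_inf' hSne R
    rw [hRs, hje]; exact hR j
  have hRsRmax : Rs ≤ Rmax := by
    obtain ⟨j, hj, hje⟩ := Finset.exists_mem_eq_inf' hSne R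
    rw [hRs, hje, hRmax]
    exact Finset.le_sup' R (hS hj)
  have hRmaxpos : 0 < Rmax := lt_of_lt_of_le hRs0 hRsRmax
  have hαmax0 : 0 < αmax := by
    rw [hαmax]
    obtain ⟨j, hj, hje⟩ := Finset.exists_mem_eq_sup' hNne αp
    rw [hje]; exact hαp j
  have hαmin0 : 0 < αmin := by
    rw [hαmin]
    obtain ⟨j, hj, hje⟩ := Finset.exists_mem_eq_inf' hNne αp
    rw [hje]; exact hαp j
  have hcard : 0 < (S.card : ℝ) := by
    exact_mod_cast Finset.card_pos.mpr hSne
  have hnpos : 0 < (n : ℝ) := by positivity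
  have hA : 0 < αmax * n + β + γ := by positivity
  have hB : 0 < αmin * S.card + β + γ := by positivity
  have hsum : (S.card : ℝ) * αmin ≤ ∑ i ∈ S, αp i := by
    calc (S.card : ℝ) * αmin = ∑ _i ∈ S, αmin := by
          rw [Finset.sum_const, nsmul_eq_mul]
      _ ≤ ∑ i ∈ S, αp i := by
          apply Finset.sum_le_sum
          intro i hi
          rw [hαmin]
          exact Finset.inf'_le αp (hS hi)
  -- cross-multiplied condition
  have hkey : Rmax * ((S.card : ℝ) * (αmax * n + β + γ)) ≤ Rmin * (n * (αmin * S.card + β + γ)) := by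
    have h0 : Rmax / Rmin ≤ (n : ℝ) * (αmin * S.card + β + γ) / ((S.card : ℝ) * (αmax * n + β + γ)) := by
      calc Rmax / Rmin ≤ ((n : ℝ) / (S.card : ℝ)) * ((αmin * S.card + β + γ) / (αmax * n + β + γ)) := hcond
        _ = (n : ℝ) * (αmin * S.card + β + γ) / ((S.card : ℝ) * (αmax * n + β + γ)) := by
            field_simp
    have h1 := (div_le_div_iff₀ hRmin0 (by positivity : (0:ℝ) < (S.card : ℝ) * (αmax * n + β + γ))).mp h0
    nlinarith [h1]
  -- main chain
  have step1 : (S.card : ℝ) * (αmax * n + β + γ) / (n * Rmin) ≤ (αmin * S.card + β + γ) / Rmax := by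
    rw [div_le_div_iff₀ (by positivity) hRmaxpos]
    nlinarith [hkey]
  have step2 : (αmin * S.card + β + γ) / Rmax ≤ (αmin * S.card + β + γ) / Rs :=
    div_le_div_of_nonneg_left hB.le hRs0 hRsRmax
  have step3 : (αmin * S.card + β + γ) / Rs ≤ ((∑ i ∈ S, αp i) + (β + γ)) / Rs := by
    have hnum : αmin * S.card + β + γ ≤ (∑ i ∈ S, αp i) + (β + γ) := by linarith [hsum]
    exact (div_le_div_iff_of_pos_right hRs0).mpr hnum
  have : (S.card : ℝ) * (αmax * n + β + γ) / (n * Rmin) ≤ ((∑ i ∈ S, αp i) + (β + γ)) / Rs :=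
    le_trans step1 (le_trans step2 step3)
  have hsplit : ((∑ i ∈ S, αp i) + (β + γ)) / Rs = (∑ i ∈ S, αp i) / Rs + (β + γ) / Rs :=
    add_div _ _ _
  linarith [this, hsplit.le]
end
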